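/- Let $Q = (-5,-3) \cup (-2,2) \cup (3,5) \subset \mathbb{R}$ and let $L \subset \mathbb{R}$ be a set with $0 \in L$ and $(L - L) \cap Q = \{0\}$. Then for every $n \in \mathbb{N}$, the number of points of $L$ in the interval $[-5n, 5n]$ is at most $4n + 1$. -/
import Mathlib


open Pointwise

lemma gap_two (L : Set ℝ) (h0 : (0 : ℝ) ∈ L)
    (hpack : (L - L) ∩ (Set.Ioo (-5 : ℝ) (-3) ∪ Set.Ioo (-2 : ℝ) 2 ∪ Set.Ioo (3 : ℝ) 5)
      = {0}) :
    ∀ x ∈ L, ∀ y ∈ L, x ≠ y → 2 ≤ |x - y| := by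
  intro x hx y hy hxy
  by_contra h
  push_neg at h
  have hmem : x - y ∈ (L - L) ∩ (Set.Ioo (-5 : ℝ) (-3) ∪ Set.Ioo (-2 : ℝ) 2 ∪ Set.Ioo (3 : ℝ) 5) := by
    refine ⟨Set.sub_mem_sub hx hy, Or.inl (Or.inr ?_)⟩
    rw [Set.mem_Ioo]
    constructor <;> [linarith [neg_abs_le (x - y)]; linarith [le_abs_self (x - y)]]
  rw [hpack] at hmem
  exact hxy (by linarith [sub_eq_zero.mp hmem])

lemma gap_five (L : Set ℝ) (h0 : (0 : ℝ) ∈ L)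
    (hpack : (L - L) ∩ (Set.Ioo (-5 : ℝ) (-3) ∪ Set.Ioo (-2 : ℝ) 2 ∪ Set.Ioo (3 : ℝ) 5)
      = {0}) :
    ∀ x ∈ L, ∀ y ∈ L, ∀ z ∈ L, x < y → y < z → 5 ≤ z - x := by
  intro x hx y hy z hz hxy hyz
  have h1 : 2 ≤ |y - x| := gap_two L h0 hpack y hy x hx (by linarith)
  have h2 : 2 ≤ |z - y| := gap_two L h0 hpack z hz y hy (by linarith)
  rw [abs_of_pos (by linarith)] at h1
  rw [abs_of_pos (by linarith)] at h2
  by_contra h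
  push_neg at h
  have hmem : z - x ∈ (L - L) ∩ (Set.Ioo (-5 : ℝ) (-3) ∪ Set.Ioo (-2 : ℝ) 2 ∪ Set.Ioo (3 : ℝ) 5) := by
    refine ⟨Set.sub_mem_sub hz hx, Or.inr ?_⟩
    rw [Set.mem_Ioo]
    constructor <;> linarith
  rw [hpack] at hmem
  have := sub_eq_zero.mp hmem
  linarith

lemma window (L : Set ℝ) (h0 : (0 : ℝ) ∈ L)
    (hpack : (L - L) ∩ (Set.Ioo (-5 : ℝ) (-3) ∪ Set.Ioo (-2 : ℝ) 2 ∪ Set.Ioo (3 : ℝ) 5)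
      = {0}) (S : Set ℝ) (hSL : S ⊆ L) (hnarrow : ∀ a ∈ S, ∀ b ∈ S, a - b < 5) :
    S.Finite ∧ S.ncard ≤ 2 := by
  rcases S.eq_empty_or_nonempty with hS | ⟨x, hx⟩
  · subst hS; simp
  · have hsub : (S \ {x}).Subsingleton := by
      intro y hy z hz
      by_contra hyz
      have hyL := hSL hy.1
      have hzL := hSL hz.1
      have hxL := hSL hx
      have hyx : y ≠ x := hy.2
      have hzx : z ≠ x := hz.2
      rcases lt_trichotomy y z with h1 | h1 | h1
      · rcases lt_trichotomy x y with h2 | h2 | h2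
        · linarith [gap_five L h0 hpack x hxL y hyL z hzL h2 h1, hnarrow z hz.1 x hx]
        · exact hyx h2.symm
        · rcases lt_trichotomy x z with h3 | h3 | h3
          · linarith [gap_five L h0 hpack y hyL x hxL z hzL h2 h3, hnarrow z hz.1 y hy.1]
          · exact hzx h3.symm
          · linarith [gap_five L h0 hpack y hyL z hzL x hxL h1 h3, hnarrow x hx y hy.1]
      · exact hyz h1
      · rcases lt_trichotomy x z with h2 | h2 | h2
        · linarith [gap_five L h0 hpack x hxL z hzL y hyL h2 h1, hnarrow y hy.1 x hx]
        · exact hzx h2.symm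
        · rcases lt_trichotomy x y with h3 | h3 | h3
          · linarith [gap_five L h0 hpack z hzL x hxL y hyL h2 h3, hnarrow y hy.1 z hz.1]
          · exact hyx h3.symm
          · linarith [gap_five L h0 hpack z hzL y hyL x hxL h1 h3, hnarrow x hx z hz.1]
    have hfin : (S \ {x}).Finite := hsub.finite
    have heq : S = insert x (S \ {x}) := by
      rw [Set.insert_diff_singleton]
      exact (Set.insert_eq_of_mem hx).symm
    constructor
    · rw [heq]; exact hfin.insert x
    · rw [heq]
      calc (insert x (S \ {x})).ncard ≤ (S \ {x}).ncard + 1 :=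
            Set.ncard_insert_le x _
        _ ≤ 1 + 1 := by
            have := (Set.ncard_le_one_iff hfin).mpr (fun ha hb => hsub ha hb)
            omega
        _ = 2 := rfl

theorem stmt_12 (L : Set ℝ) (h0 : (0 : ℝ) ∈ L)
    (hpack : (L - L) ∩ (Set.Ioo (-5 : ℝ) (-3) ∪ Set.Ioo (-2 : ℝ) 2 ∪ Set.Ioo (3 : ℝ) 5)
      = {0}) :
    ∀ n : ℕ, (L ∩ Set.Icc (-(5 * (n : ℝ))) (5 * (n : ℝ))).Finite ∧
      (L ∩ Set.Icc (-(5 * (n : ℝ))) (5 * (n : ℝ))).ncard ≤ 4 * n + 1 := by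
  intro n
  induction n with
  | zero =>
    have hsub : L ∩ Set.Icc (-(5 * ((0 : ℕ) : ℝ))) (5 * ((0 : ℕ) : ℝ)) ⊆ {0} := by
      intro x hx
      have h1 := hx.2.1
      have h2 := hx.2.2
      norm_num at h1 h2 ⊢
      linarith
    constructor
    · exact (Set.finite_singleton 0).subset hsub
    · calc _ ≤ ({(0:ℝ)} : Set ℝ).ncard := Set.ncard_le_ncard hsub (Set.finite_singleton 0)
        _ = 1 := Set.ncard_singleton 0
        _ ≤ 4 * 0 + 1 := by norm_num
  | succ n ih =>
    set A : Set ℝ := L ∩ Set.Ico (-(5 * ((n : ℝ) + 1))) (-(5 * (n : ℝ))) with hA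
    set B : Set ℝ := L ∩ Set.Ioc (5 * (n : ℝ)) (5 * ((n : ℝ) + 1)) with hB
    have hAw : A.Finite ∧ A.ncard ≤ 2 := by
      apply window L h0 hpack A Set.inter_subset_left
      intro a ha b hb
      have := ha.2.1; have := ha.2.2; have := hb.2.1; have := hb.2.2
      linarith
    have hBw : B.Finite ∧ B.ncard ≤ 2 := by
      apply window L h0 hpack B Set.inter_subset_left
      intro a ha b hb
      have := ha.2.1; have := ha.2.2; have := hb.2.1; have := hb.2.2
      linarith
    have hsub : L ∩ Set.Icc (-(5 * ((n + 1 : ℕ) : ℝ))) (5 * ((n + 1 : ℕ) : ℝ)) ⊆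
        (L ∩ Set.Icc (-(5 * (n : ℝ))) (5 * (n : ℝ))) ∪ A ∪ B := by
      intro x hx
      obtain ⟨hxL, hx1, hx2⟩ := hx
      push_cast at hx1 hx2
      rcases lt_or_ge x (-(5 * (n : ℝ))) with h | h
      · exact Or.inl (Or.inr ⟨hxL, by constructor <;> [linarith; exact h]⟩)
      · rcases le_or_gt x (5 * (n : ℝ)) with h' | h'
        · exact Or.inl (Or.inl ⟨hxL, h, h'⟩)
        · exact Or.inr ⟨hxL, h', by linarith⟩
    have hfin : ((L ∩ Set.Icc (-(5 * (n : ℝ))) (5 * (n : ℝ))) ∪ A ∪ B).Finite :=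
      ((ih.1.union hAw.1).union hBw.1)
    constructor
    · exact hfin.subset hsub
    · calc (L ∩ Set.Icc (-(5 * ((n + 1 : ℕ) : ℝ))) (5 * ((n + 1 : ℕ) : ℝ))).ncard
          ≤ ((L ∩ Set.Icc (-(5 * (n : ℝ))) (5 * (n : ℝ))) ∪ A ∪ B).ncard :=
            Set.ncard_le_ncard hsub hfin
        _ ≤ ((L ∩ Set.Icc (-(5 * (n : ℝ))) (5 * (n : ℝ))) ∪ A).ncard + B.ncard :=
            Set.ncard_union_le _ _
        _ ≤ (L ∩ Set.Icc (-(5 * (n : ℝ))) (5 * (n : ℝ))).ncard + A.ncard + B.ncard := by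
            have := Set.ncard_union_le (L ∩ Set.Icc (-(5 * (n : ℝ))) (5 * (n : ℝ))) A
            omega
        _ ≤ (4 * n + 1) + 2 + 2 := by
            have := ih.2; have := hAw.2; have := hBw.2; omega
        _ ≤ 4 * (n + 1) + 1 := by omega
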